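/- Let k ≥ 1, V = ℂ^k, and Λ = ⋀ V the exterior algebra of V over ℂ with its ℤ₂-grading Λ = Λ₀ ⊕ Λ₁ by even/odd exterior degree. Let W be a contraction-invariant subspace of Λ which is graded (W is the sum of W ∩ Λ₀ and W ∩ Λ₁), with W ≠ 0 and W ≠ ℂ·1. Then there exists no consistent, super positive sesquilinear form B on W such that for every φ ∈ V* the restriction of ι_φ to W is B-super-skew-adjoint. (Paper's Proposition 6.2: the only unitarizable subrepresentation of Λ_ℂ^k is ℂ·1.) -/

import Mathlib

open CliffordAlgebra ExteriorAlgebra DirectSum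

variable {k : ℕ}

noncomputable abbrev eb (k : ℕ) := Pi.basisFun ℂ (Fin k)

lemma iota_anticomm (a b : Fin k → ℂ) :
    CliffordAlgebra.ι (0 : QuadraticForm ℂ (Fin k → ℂ)) a * CliffordAlgebra.ι 0 b
      = -(CliffordAlgebra.ι 0 b * CliffordAlgebra.ι 0 a) := by
  have h := CliffordAlgebra.ι_mul_ι_add_swap_of_isOrtho
    (Q := (0 : QuadraticForm ℂ (Fin k → ℂ))) (a := a) (b := b) (by simp [QuadraticMap.IsOrtho])
  exact eq_neg_of_add_eq_zero_left h

lemma numberOp (n : ℕ) (x : ExteriorAlgebra ℂ (Fin k → ℂ)) (hx : x ∈ ⋀[ℂ]^n (Fin k → ℂ)) :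
    ∑ i : Fin k, CliffordAlgebra.ι (0 : QuadraticForm ℂ (Fin k → ℂ)) (eb k i) *
      (contractLeft ((eb k).coord i) x) = n • x := by
  induction hx using Submodule.pow_induction_on_left' with
  | algebraMap r => simp
  | add x y i hx hy ihx ihy =>
      simp only [map_add, mul_add, Finset.sum_add_distrib, ihx, ihy, smul_add]
  | mem_mul m hm i x hx ih =>
      obtain ⟨v, rfl⟩ := hm
      have hterm : ∀ j : Fin k, CliffordAlgebra.ι (0 : QuadraticForm ℂ (Fin k → ℂ)) (eb k j) *
          (contractLeft ((eb k).coord j) (CliffordAlgebra.ι 0 v * x)) =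
          ((eb k).coord j v) • (CliffordAlgebra.ι 0 (eb k j) * x)
            + CliffordAlgebra.ι 0 v * (CliffordAlgebra.ι 0 (eb k j) *
                (contractLeft ((eb k).coord j) x)) := by
        intro j
        rw [contractLeft_ι_mul, mul_sub, mul_smul_comm, ← mul_assoc,
          iota_anticomm (eb k j) v, neg_mul, mul_assoc, sub_neg_eq_add]
      rw [Finset.sum_congr rfl fun j _ => hterm j, Finset.sum_add_distrib,
        ← Finset.mul_sum, ih]
      have hv : ∑ j : Fin k, ((eb k).coord j v) •
            (CliffordAlgebra.ι (0 : QuadraticForm ℂ (Fin k → ℂ)) (eb k j) * x)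
          = CliffordAlgebra.ι 0 v * x := by
        have h1 : ∑ j : Fin k, ((eb k).coord j v) •
              CliffordAlgebra.ι (0 : QuadraticForm ℂ (Fin k → ℂ)) (eb k j)
            = CliffordAlgebra.ι 0 v := by
          conv_rhs => rw [← (eb k).sum_repr v]
          rw [map_sum]
          simp [Module.Basis.coord_apply]
        calc ∑ j : Fin k, ((eb k).coord j v) • (CliffordAlgebra.ι 0 (eb k j) * x)
            = (∑ j : Fin k, ((eb k).coord j v) •
                CliffordAlgebra.ι (0 : QuadraticForm ℂ (Fin k → ℂ)) (eb k j)) * x := by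
              rw [Finset.sum_mul]
              exact Finset.sum_congr rfl fun j _ => (smul_mul_assoc _ _ _).symm
          _ = CliffordAlgebra.ι 0 v * x := by rw [h1]
      rw [hv, mul_smul_comm, succ_nsmul, add_comm]

lemma contract_pow_mem (n : ℕ) (x : ExteriorAlgebra ℂ (Fin k → ℂ))
    (hx : x ∈ ⋀[ℂ]^n (Fin k → ℂ)) (φ : Module.Dual ℂ (Fin k → ℂ)) :
    contractLeft φ x ∈ ⋀[ℂ]^(n - 1) (Fin k → ℂ) := by
  induction hx using Submodule.pow_induction_on_left' with
  | algebraMap r => simp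
  | add x y i hx hy ihx ihy => simpa [map_add] using Submodule.add_mem _ ihx ihy
  | mem_mul m hm i x hx ih =>
      obtain ⟨v, rfl⟩ := hm
      rw [contractLeft_ι_mul]
      show _ ∈ ⋀[ℂ]^i (Fin k → ℂ)
      refine Submodule.sub_mem _ (Submodule.smul_mem _ _ hx) ?_
      rcases i with _ | j
      · rw [pow_zero, Submodule.mem_one] at hx
        obtain ⟨r, rfl⟩ := hx
        simp
      · have h1 : CliffordAlgebra.ι (0 : QuadraticForm ℂ (Fin k → ℂ)) v
            ∈ (LinearMap.range (ExteriorAlgebra.ι ℂ (M := Fin k → ℂ))) ^ 1 := by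
          rw [pow_one]; exact LinearMap.mem_range_self _ v
        have h2 := Submodule.mul_mem_mul h1 (show contractLeft φ x ∈
          (LinearMap.range (ExteriorAlgebra.ι ℂ (M := Fin k → ℂ))) ^ j from ih)
        rw [← pow_add, Nat.add_comm] at h2
        exact h2

noncomputable def numOp (k : ℕ) :
    ExteriorAlgebra ℂ (Fin k → ℂ) →ₗ[ℂ] ExteriorAlgebra ℂ (Fin k → ℂ) :=
  ∑ i : Fin k, (LinearMap.mulLeft ℂ
      (CliffordAlgebra.ι (0 : QuadraticForm ℂ (Fin k → ℂ)) (eb k i))).comp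
    (contractLeft ((eb k).coord i))

lemma numOp_apply (x : ExteriorAlgebra ℂ (Fin k → ℂ)) :
    numOp k x = ∑ i : Fin k, CliffordAlgebra.ι (0 : QuadraticForm ℂ (Fin k → ℂ)) (eb k i) *
      (contractLeft ((eb k).coord i) x) := by
  simp [numOp, LinearMap.sum_apply]

lemma numOp_of_mem {n : ℕ} {x : ExteriorAlgebra ℂ (Fin k → ℂ)}
    (hx : x ∈ ⋀[ℂ]^n (Fin k → ℂ)) : numOp k x = n • x := by
  rw [numOp_apply]; exact numberOp n x hx

lemma numOp_decompose (x : ExteriorAlgebra ℂ (Fin k → ℂ)) (n : ℕ) :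
    (DirectSum.decompose (fun i : ℕ => ⋀[ℂ]^i (Fin k → ℂ)) (numOp k x) n :
        ExteriorAlgebra ℂ (Fin k → ℂ))
      = numOp k (DirectSum.decompose (fun i : ℕ => ⋀[ℂ]^i (Fin k → ℂ)) x n :
          ExteriorAlgebra ℂ (Fin k → ℂ)) := by
  induction x using DirectSum.Decomposition.inductionOn
      (fun i : ℕ => ⋀[ℂ]^i (Fin k → ℂ)) with
  | zero => simp
  | @homogeneous m y =>
      have hy : (y : ExteriorAlgebra ℂ (Fin k → ℂ)) ∈ ⋀[ℂ]^m (Fin k → ℂ) := y.2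
      have hEy : numOp k (y : ExteriorAlgebra ℂ (Fin k → ℂ)) = m • (y : ExteriorAlgebra ℂ (Fin k → ℂ)) := numOp_of_mem hy
      by_cases hnm : n = m
      · subst hnm
        rw [hEy, DirectSum.decompose_of_mem_same (fun i : ℕ => ⋀[ℂ]^i (Fin k → ℂ))
            (nsmul_mem hy n),
          DirectSum.decompose_of_mem_same (fun i : ℕ => ⋀[ℂ]^i (Fin k → ℂ)) hy, hEy]
      · rw [hEy, DirectSum.decompose_of_mem_ne (fun i : ℕ => ⋀[ℂ]^i (Fin k → ℂ))
            (nsmul_mem hy m) (Ne.symm hnm),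
          DirectSum.decompose_of_mem_ne (fun i : ℕ => ⋀[ℂ]^i (Fin k → ℂ)) hy (Ne.symm hnm),
          map_zero]
  | add a b ha hb =>
      rw [map_add, DirectSum.decompose_add, DirectSum.add_apply, Submodule.coe_add, ha, hb,
        DirectSum.decompose_add, DirectSum.add_apply, Submodule.coe_add, map_add]

lemma ker_contract (x : ExteriorAlgebra ℂ (Fin k → ℂ))
    (hx : ∀ φ : Module.Dual ℂ (Fin k → ℂ), contractLeft φ x = 0) :
    x ∈ Submodule.span ℂ {(1 : ExteriorAlgebra ℂ (Fin k → ℂ))} := by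
  classical
  set ℳ := fun i : ℕ => ⋀[ℂ]^i (Fin k → ℂ) with hℳ
  have hE0 : numOp k x = 0 := by
    rw [numOp_apply]
    simp [hx]
  have hzero : ∀ n : ℕ, n ≠ 0 → (DirectSum.decompose ℳ x n :
      ExteriorAlgebra ℂ (Fin k → ℂ)) = 0 := by
    intro n hn
    have h1 : numOp k (DirectSum.decompose ℳ x n :
        ExteriorAlgebra ℂ (Fin k → ℂ)) = 0 := by
      rw [← numOp_decompose, hE0]
      simp
    have h2 := numOp_of_mem (SetLike.coe_mem (DirectSum.decompose ℳ x n))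
    rw [h1] at h2
    have h3 := h2.symm
    rw [← Nat.cast_smul_eq_nsmul ℂ, smul_eq_zero] at h3
    rcases h3 with h3 | h3
    · exact absurd (Nat.cast_eq_zero.mp h3) hn
    · exact h3
  have hsupp : (DirectSum.decompose ℳ x).support ⊆ {0} := by
    intro i hi
    simp only [Finset.mem_singleton]
    by_contra hne
    exact (DFinsupp.mem_support_iff.mp hi) (Subtype.ext (hzero i hne))
  have hx0 : x = (DirectSum.decompose ℳ x 0 : ExteriorAlgebra ℂ (Fin k → ℂ)) := by
    conv_lhs => rw [← DirectSum.sum_support_decompose ℳ x]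
    rw [Finset.sum_subset hsupp (by
      intro i _ hi
      rw [DFinsupp.notMem_support_iff.mp hi]
      rfl)]
    rw [Finset.sum_singleton]
  have hmem : x ∈ ℳ 0 := hx0 ▸ SetLike.coe_mem _
  have hmem' : x ∈ (LinearMap.range (ExteriorAlgebra.ι ℂ (M := Fin k → ℂ))) ^ 0 := hmem
  rw [pow_zero, Submodule.mem_one] at hmem'
  obtain ⟨r, hr⟩ := hmem'
  exact Submodule.mem_span_singleton.mpr ⟨r, by rw [← hr, Algebra.algebraMap_eq_smul_one]⟩

lemma mul_iota_evenOdd (m : Fin k → ℂ) (z : ExteriorAlgebra ℂ (Fin k → ℂ)) (j : ZMod 2)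
    (hz : z ∈ evenOdd (0 : QuadraticForm ℂ (Fin k → ℂ)) j) :
    CliffordAlgebra.ι (0 : QuadraticForm ℂ (Fin k → ℂ)) m * z ∈ evenOdd 0 (j + 1) := by
  have := SetLike.mul_mem_graded (ι_mem_evenOdd_one (0 : QuadraticForm ℂ (Fin k → ℂ)) m) hz
  rwa [add_comm] at this

lemma contract_evenOdd (i : ZMod 2) (x : ExteriorAlgebra ℂ (Fin k → ℂ))
    (hx : x ∈ evenOdd (0 : QuadraticForm ℂ (Fin k → ℂ)) i) (φ : Module.Dual ℂ (Fin k → ℂ)) :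
    contractLeft φ x ∈ evenOdd (0 : QuadraticForm ℂ (Fin k → ℂ)) (i + 1) := by
  refine CliffordAlgebra.evenOdd_induction (Q := (0 : QuadraticForm ℂ (Fin k → ℂ))) i
      (motive := fun x _ => contractLeft φ x ∈
        evenOdd (0 : QuadraticForm ℂ (Fin k → ℂ)) (i + 1)) ?_ ?_ ?_ x hx
  · intro v h
    rcases hiv : i.val with _ | m
    · rw [hiv, pow_zero, Submodule.mem_one] at h
      obtain ⟨r, rfl⟩ := h
      rw [contractLeft_algebraMap]
      exact Submodule.zero_mem _
    · rw [hiv] at h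
      have hmem := contract_pow_mem (m + 1) v h φ
      have h2 : ((m : ℕ) : ZMod 2) = i + 1 := by
        have h3 : ((i.val : ℕ) : ZMod 2) = i := ZMod.natCast_zmod_val i
        rw [hiv] at h3
        push_cast at h3
        rw [← h3, add_assoc]
        have h4 : (1 + 1 : ZMod 2) = 0 := by decide
        rw [h4, add_zero]
      exact Submodule.mem_iSup_of_mem ⟨m, h2⟩ hmem
  · intro a b ha hb iha ihb
    rw [map_add]; exact Submodule.add_mem _ iha ihb
  · intro m₁ m₂ y hy ihy
    rw [mul_assoc, contractLeft_ι_mul, contractLeft_ι_mul, mul_sub, mul_smul_comm]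
    have h11 : ∀ j : ZMod 2, j + 1 + 1 = j := by decide
    refine Submodule.sub_mem _ (Submodule.smul_mem _ _ (mul_iota_evenOdd m₂ y i hy))
      (Submodule.sub_mem _ (Submodule.smul_mem _ _ (mul_iota_evenOdd m₁ y i hy)) ?_)
    have := mul_iota_evenOdd m₁ _ _ (mul_iota_evenOdd m₂ _ _ ihy)
    rwa [h11] at this



/-- paper's Proposition 6.2.
Let `k ≥ 1`, `Λ = ⋀ ℂ^k` with its ℤ₂-grading `Λ = Λ₀ ⊕ Λ₁` by even/odd exterior
degree, and let `W` be a graded contraction-invariant subspace of `Λ` with `W ≠ 0`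
and `W ≠ ℂ·1`.  Then there exists no consistent, super positive sesquilinear form
`B` on `W` such that the restriction to `W` of every contraction `ι_φ` is
`B`-super-skew-adjoint. -/
theorem stmt_10 (k : ℕ) (hk : 1 ≤ k)
    (Λ0 Λ1 : Submodule ℂ (ExteriorAlgebra ℂ (Fin k → ℂ)))
    (hΛ0 : Λ0 = CliffordAlgebra.evenOdd (0 : QuadraticForm ℂ (Fin k → ℂ)) 0)
    (hΛ1 : Λ1 = CliffordAlgebra.evenOdd (0 : QuadraticForm ℂ (Fin k → ℂ)) 1)
    (W : Submodule ℂ (ExteriorAlgebra ℂ (Fin k → ℂ)))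
    -- `W` is contraction-invariant
    (hinv : ∀ φ : Module.Dual ℂ (Fin k → ℂ), ∀ x ∈ W, CliffordAlgebra.contractLeft φ x ∈ W)
    -- `W` is graded
    (hgraded : W = (W ⊓ Λ0) ⊔ (W ⊓ Λ1))
    (hne_bot : W ≠ ⊥)
    (hne_one : W ≠ Submodule.span ℂ {(1 : ExteriorAlgebra ℂ (Fin k → ℂ))}) :
    ¬ ∃ B : ExteriorAlgebra ℂ (Fin k → ℂ) → ExteriorAlgebra ℂ (Fin k → ℂ) → ℂ,
      -- `B` is ℂ-linear in the first argument (on `W`)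
      (∀ (a : ℂ), ∀ u ∈ W, ∀ u' ∈ W, ∀ v ∈ W, B (a • u + u') v = a * B u v + B u' v) ∧
      -- `B` is conjugate-linear in the second argument (on `W`)
      (∀ (a : ℂ), ∀ u ∈ W, ∀ v ∈ W, ∀ v' ∈ W,
        B u (a • v + v') = (starRingEnd ℂ) a * B u v + B u v') ∧
      -- `B` is consistent (on `W`)
      (∀ u ∈ W ⊓ Λ0, ∀ v ∈ W ⊓ Λ1, B u v = 0 ∧ B v u = 0) ∧
      -- `B` is super positive (on `W`)
      (∀ v ∈ W ⊓ Λ0, v ≠ 0 → ∃ t : ℝ, 0 < t ∧ B v v = (t : ℂ)) ∧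
      (∀ v ∈ W ⊓ Λ1, v ≠ 0 → ∃ t : ℝ, 0 < t ∧ B v v = Complex.I * (t : ℂ)) ∧
      -- the restriction of every contraction `ι_φ` to `W` is `B`-super-skew-adjoint
      (∀ φ : Module.Dual ℂ (Fin k → ℂ),
        (∀ v ∈ W ⊓ Λ0, ∀ w ∈ W,
          B (CliffordAlgebra.contractLeft φ v) w + B v (CliffordAlgebra.contractLeft φ w) = 0) ∧
        (∀ v ∈ W ⊓ Λ1, ∀ w ∈ W,
          B (CliffordAlgebra.contractLeft φ v) w - B v (CliffordAlgebra.contractLeft φ w) = 0)) := by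
  
  subst hΛ0 hΛ1
  rintro ⟨B, hlin, hconj, hcons, hpos0, hpos1, hskew⟩
  have hB0 : ∀ v ∈ W, B v 0 = 0 := by
    intro v hv
    have h := hconj 1 v hv 0 W.zero_mem 0 W.zero_mem
    rw [one_smul, add_zero, map_one, one_mul] at h
    exact (right_eq_add.mp h)
  have hdis : Disjoint (evenOdd (0 : QuadraticForm ℂ (Fin k → ℂ)) 0)
      (evenOdd (0 : QuadraticForm ℂ (Fin k → ℂ)) 1) :=
    (CliffordAlgebra.evenOdd_isCompl (Q := (0 : QuadraticForm ℂ (Fin k → ℂ)))).disjoint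
  have h1mem : (1 : ExteriorAlgebra ℂ (Fin k → ℂ)) ∈
      evenOdd (0 : QuadraticForm ℂ (Fin k → ℂ)) 0 :=
    Submodule.one_le.mp (CliffordAlgebra.one_le_evenOdd_zero (0 : QuadraticForm ℂ (Fin k → ℂ)))
  have hspan : Submodule.span ℂ {(1 : ExteriorAlgebra ℂ (Fin k → ℂ))} ≤
      evenOdd (0 : QuadraticForm ℂ (Fin k → ℂ)) 0 := by
    rw [Submodule.span_le]; simpa using h1mem
  -- Step A: the odd part of W is trivial
  have hW1 : W ⊓ evenOdd (0 : QuadraticForm ℂ (Fin k → ℂ)) 1 = ⊥ := by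
    rw [Submodule.eq_bot_iff]
    intro v hv
    obtain ⟨hvW, hvO⟩ := Submodule.mem_inf.mp hv
    have hc : ∀ φ : Module.Dual ℂ (Fin k → ℂ), contractLeft φ v = 0 := by
      intro φ
      have hwW : contractLeft φ v ∈ W := hinv φ v hvW
      have hwE : contractLeft φ v ∈ evenOdd (0 : QuadraticForm ℂ (Fin k → ℂ)) 0 := by
        have h := contract_evenOdd 1 v hvO φ
        rwa [(show (1 : ZMod 2) + 1 = 0 by decide)] at h
      by_contra hw0
      have hsk := (hskew φ).2 v hv (contractLeft φ v) hwW
      rw [contractLeft_contractLeft, hB0 v hvW, sub_zero] at hsk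
      obtain ⟨t, ht, hBt⟩ := hpos0 (contractLeft φ v) (Submodule.mem_inf.mpr ⟨hwW, hwE⟩) hw0
      rw [hBt] at hsk
      exact absurd (by exact_mod_cast hsk) (ne_of_gt ht)
    have hv0 : v ∈ evenOdd (0 : QuadraticForm ℂ (Fin k → ℂ)) 0 := hspan (ker_contract v hc)
    exact (Submodule.mem_bot ℂ).mp (hdis.le_bot (Submodule.mem_inf.mpr ⟨hv0, hvO⟩))
  -- Step B: W is contained in the span of 1
  have hWeq := hgraded
  rw [hW1, sup_bot_eq] at hWeq
  have hWle : W ≤ Submodule.span ℂ {(1 : ExteriorAlgebra ℂ (Fin k → ℂ))} := by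
    intro v hvW
    have hvE : v ∈ evenOdd (0 : QuadraticForm ℂ (Fin k → ℂ)) 0 :=
      (Submodule.mem_inf.mp (hWeq ▸ hvW)).2
    refine ker_contract v fun φ => ?_
    have h1 : contractLeft φ v ∈ W := hinv φ v hvW
    have h2 : contractLeft φ v ∈ evenOdd (0 : QuadraticForm ℂ (Fin k → ℂ)) 1 := by
      have h := contract_evenOdd 0 v hvE φ
      rwa [zero_add] at h
    have := hW1 ▸ Submodule.mem_inf.mpr ⟨h1, h2⟩
    exact (Submodule.mem_bot ℂ).mp this
  -- conclude
  obtain ⟨v, hvW, hv0⟩ := (Submodule.ne_bot_iff W).mp hne_bot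
  obtain ⟨c, hc⟩ := Submodule.mem_span_singleton.mp (hWle hvW)
  have hcne : c ≠ 0 := by
    rintro rfl
    rw [zero_smul] at hc
    exact hv0 hc.symm
  have h1W : (1 : ExteriorAlgebra ℂ (Fin k → ℂ)) ∈ W := by
    have h := W.smul_mem c⁻¹ hvW
    rwa [← hc, smul_smul, inv_mul_cancel₀ hcne, one_smul] at h
  exact hne_one (le_antisymm hWle (by rw [Submodule.span_le]; simpa using h1W))
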